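/- Let s ≥ 1, let A_s = inf{ ln(1-γ^s)/(s ln(1-γ)) : γ ∈ [1/2,1) }, B_s⁻ = sup{ (1-γ^t)/(1-γ)^t : γ ∈ [0,1/2], t ∈ [1/s,s] }, B_s⁺ = sup{ (1+γ^t)/(1+γ)^t : γ ∈ [0,1], t ∈ [1/s,s] }, and B_s = max(B_s⁻, B_s⁺). Then for all α, β ∈ [-1,1] and t ∈ [1/s, s]: |sgn(α)|α|^t - sgn(β)|β|^t| ≤ max( |α-β|^{A_s t}, B_s |α-β|^t ). -/

import Mathlib

/-- The constant `A_s = inf { ln(1-γ^s)/(s ln(1-γ)) : γ ∈ [1/2, 1) }`. -/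
noncomputable def Aconst (s : ℝ) : ℝ :=
  sInf ((fun γ : ℝ => Real.log (1 - γ ^ s) / (s * Real.log (1 - γ))) '' Set.Ico (1/2 : ℝ) 1)

/-- `B_s⁻ = sup { (1-γ^t)/(1-γ)^t : γ ∈ [0,1/2], t ∈ [1/s,s] }`. -/
noncomputable def BconstNeg (s : ℝ) : ℝ :=
  sSup ((fun q : ℝ × ℝ => (1 - q.1 ^ q.2) / (1 - q.1) ^ q.2) ''
    (Set.Icc (0:ℝ) (1/2) ×ˢ Set.Icc (1/s) s))

/-- `B_s⁺ = sup { (1+γ^t)/(1+γ)^t : γ ∈ [0,1], t ∈ [1/s,s] }`. -/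
noncomputable def BconstPos (s : ℝ) : ℝ :=
  sSup ((fun q : ℝ × ℝ => (1 + q.1 ^ q.2) / (1 + q.1) ^ q.2) ''
    (Set.Icc (0:ℝ) 1 ×ˢ Set.Icc (1/s) s))

/-- `B_s = max(B_s⁻, B_s⁺)`. -/
noncomputable def Bconst (s : ℝ) : ℝ := max (BconstNeg s) (BconstPos s)

lemma aux_mem_nonneg (s : ℝ) (hs : 1 ≤ s) (γ : ℝ) (hγ : γ ∈ Set.Ico (1/2:ℝ) 1) :
    0 ≤ Real.log (1 - γ ^ s) / (s * Real.log (1 - γ)) := by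
  obtain ⟨h1, h2⟩ := hγ
  have hγ0 : (0:ℝ) < γ := lt_of_lt_of_le (by norm_num) h1
  have h1γ : (0:ℝ) < 1 - γ := by linarith
  have hγs : γ ^ s < 1 := Real.rpow_lt_one hγ0.le h2 (by linarith)
  have hγs0 : (0:ℝ) ≤ γ ^ s := Real.rpow_nonneg hγ0.le s
  have hnum : Real.log (1 - γ ^ s) ≤ 0 := Real.log_nonpos (by linarith) (by linarith)
  have hden : s * Real.log (1 - γ) < 0 :=
    mul_neg_of_pos_of_neg (by linarith) (Real.log_neg h1γ (by linarith))
  exact div_nonneg_iff.mpr (Or.inr ⟨hnum, hden.le⟩)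

lemma aux_A_bdd (s : ℝ) (hs : 1 ≤ s) :
    BddBelow ((fun γ : ℝ => Real.log (1 - γ ^ s) / (s * Real.log (1 - γ))) '' Set.Ico (1/2 : ℝ) 1) := by
  refine ⟨0, ?_⟩
  rintro b ⟨γ, hγ, rfl⟩
  exact aux_mem_nonneg s hs γ hγ

lemma aux_A_nonneg (s : ℝ) (hs : 1 ≤ s) : 0 ≤ Aconst s := by
  apply le_csInf
  · exact ⟨_, ⟨1/2, ⟨le_refl _, by norm_num⟩, rfl⟩⟩
  · rintro b ⟨γ, hγ, rfl⟩
    exact aux_mem_nonneg s hs γ hγ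

lemma aux_A_le_one (s : ℝ) (hs : 1 ≤ s) : Aconst s ≤ 1 := by
  have hmem : Real.log (1 - (1/2:ℝ) ^ s) / (s * Real.log (1 - 1/2)) ∈
      ((fun γ : ℝ => Real.log (1 - γ ^ s) / (s * Real.log (1 - γ))) '' Set.Ico (1/2 : ℝ) 1) :=
    ⟨1/2, ⟨le_refl _, by norm_num⟩, rfl⟩
  refine (csInf_le (aux_A_bdd s hs) hmem).trans ?_
  have h2 : ((1:ℝ)/2) ^ s ≤ (1:ℝ)/2 := by
    calc ((1:ℝ)/2) ^ s ≤ ((1:ℝ)/2) ^ (1:ℝ) :=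
          Real.rpow_le_rpow_of_exponent_ge (by norm_num) (by norm_num) hs
      _ = 1/2 := Real.rpow_one _
  have hden : s * Real.log (1 - 1/2) < 0 :=
    mul_neg_of_pos_of_neg (by linarith) (Real.log_neg (by norm_num) (by norm_num))
  rw [div_le_one_iff]
  right; right
  constructor
  · exact hden
  · have : s * Real.log (1 - 1/2:ℝ) = Real.log ((1/2:ℝ) ^ s) := by
      rw [Real.log_rpow (by norm_num)]; norm_num
    rw [this]
    apply Real.log_le_log (Real.rpow_pos_of_pos (by norm_num) s)
    linarith

lemma aux_A_key (s : ℝ) (hs : 1 ≤ s) (γ : ℝ) (hγ : γ ∈ Set.Ico (1/2:ℝ) 1) :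
    1 - γ ^ s ≤ (1 - γ) ^ (Aconst s * s) := by
  obtain ⟨h1, h2⟩ := hγ
  have hγ0 : (0:ℝ) < γ := lt_of_lt_of_le (by norm_num) h1
  have h1γ : (0:ℝ) < 1 - γ := by linarith
  have hγs : γ ^ s < 1 := Real.rpow_lt_one hγ0.le h2 (by linarith)
  have hpos : (0:ℝ) < 1 - γ ^ s := by linarith
  have hden : s * Real.log (1 - γ) < 0 :=
    mul_neg_of_pos_of_neg (by linarith) (Real.log_neg h1γ (by linarith))
  have hA : Aconst s ≤ Real.log (1 - γ ^ s) / (s * Real.log (1 - γ)) :=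
    csInf_le (aux_A_bdd s hs) ⟨γ, ⟨h1, h2⟩, rfl⟩
  have hkey : Real.log (1 - γ ^ s) ≤ Real.log (1 - γ) * (Aconst s * s) := by
    have := mul_le_mul_of_nonpos_right hA hden.le
    rw [div_mul_cancel₀ _ hden.ne] at this
    nlinarith [this]
  calc 1 - γ ^ s = Real.exp (Real.log (1 - γ ^ s)) := (Real.exp_log hpos).symm
    _ ≤ Real.exp (Real.log (1 - γ) * (Aconst s * s)) := Real.exp_le_exp.mpr hkey
    _ = (1 - γ) ^ (Aconst s * s) := (Real.rpow_def_of_pos h1γ _).symm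

lemma aux_Bneg_ge (s : ℝ) (hs : 1 ≤ s) (γ t : ℝ) (hγ : γ ∈ Set.Icc (0:ℝ) (1/2))
    (ht : t ∈ Set.Icc (1/s) s) : (1 - γ ^ t) / (1 - γ) ^ t ≤ BconstNeg s := by
  have hs0 : (0:ℝ) < s := lt_of_lt_of_le one_pos hs
  apply le_csSup
  · refine ⟨(2:ℝ) ^ s, ?_⟩
    rintro b ⟨⟨γ', t'⟩, ⟨hγ', ht'⟩, rfl⟩
    simp only at *
    have ht'0 : (0:ℝ) < t' := lt_of_lt_of_le (by positivity) ht'.1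
    have h1 : (1:ℝ) - γ' ^ t' ≤ 1 := by
      have := Real.rpow_nonneg hγ'.1 t'; linarith
    have h2 : ((1:ℝ)/2) ^ t' ≤ (1 - γ') ^ t' :=
      Real.rpow_le_rpow (by norm_num) (by linarith [hγ'.2]) ht'0.le
    have h3 : (0:ℝ) < ((1:ℝ)/2) ^ t' := Real.rpow_pos_of_pos (by norm_num) t'
    calc (1 - γ' ^ t') / (1 - γ') ^ t' ≤ 1 / ((1:ℝ)/2) ^ t' := div_le_div₀ (by norm_num) h1 h3 h2
      _ = (2:ℝ) ^ t' := by
          rw [one_div, ← Real.inv_rpow (by norm_num : (0:ℝ) ≤ 1/2)]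
          norm_num
      _ ≤ (2:ℝ) ^ s := Real.rpow_le_rpow_of_exponent_le (by norm_num) ht'.2
  · exact ⟨(γ, t), ⟨hγ, ht⟩, rfl⟩

lemma aux_Bpos_ge (s : ℝ) (hs : 1 ≤ s) (γ t : ℝ) (hγ : γ ∈ Set.Icc (0:ℝ) 1)
    (ht : t ∈ Set.Icc (1/s) s) : (1 + γ ^ t) / (1 + γ) ^ t ≤ BconstPos s := by
  have hs0 : (0:ℝ) < s := lt_of_lt_of_le one_pos hs
  apply le_csSup
  · refine ⟨(2:ℝ), ?_⟩
    rintro b ⟨⟨γ', t'⟩, ⟨hγ', ht'⟩, rfl⟩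
    simp only at *
    have ht'0 : (0:ℝ) < t' := lt_of_lt_of_le (by positivity) ht'.1
    have h1 : (1:ℝ) + γ' ^ t' ≤ 2 := by
      have := Real.rpow_le_one hγ'.1 hγ'.2 ht'0.le; linarith
    have h2 : (1:ℝ) ≤ (1 + γ') ^ t' := Real.one_le_rpow (by linarith [hγ'.1]) ht'0.le
    calc (1 + γ' ^ t') / (1 + γ') ^ t' ≤ 2 / 1 := div_le_div₀ (by norm_num) h1 one_pos h2
      _ = 2 := by norm_num
  · exact ⟨(γ, t), ⟨hγ, ht⟩, rfl⟩

lemma same_sign_lemma (s : ℝ) (hs : 1 ≤ s) (a b t : ℝ) (hb0 : 0 ≤ b) (hba : b ≤ a) (ha1 : a ≤ 1)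
    (ht : t ∈ Set.Icc (1/s) s) :
    a ^ t - b ^ t ≤ max ((a - b) ^ (Aconst s * t)) (Bconst s * (a - b) ^ t) := by
  have hs0 : (0:ℝ) < s := lt_of_lt_of_le one_pos hs
  have ht0 : (0:ℝ) < t := lt_of_lt_of_le (by positivity) ht.1
  rcases eq_or_lt_of_le (hb0.trans hba) with ha0 | ha0
  · -- a = 0, hence b = 0
    have hb : b = 0 := le_antisymm (ha0 ▸ hba) hb0
    rw [← ha0, hb, sub_self]
    exact le_trans (Real.rpow_nonneg (by norm_num) _) (le_max_left _ _)
  · set γ : ℝ := b / a with hγdef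
    have hγ0 : 0 ≤ γ := div_nonneg hb0 ha0.le
    have hγ1 : γ ≤ 1 := (div_le_one ha0).mpr hba
    have hbγ : b = a * γ := by rw [hγdef, ← mul_div_assoc, mul_div_cancel_left₀ _ ha0.ne']
    have heq2 : a - b = a * (1 - γ) := by rw [hbγ]; ring
    have heq1 : a ^ t - b ^ t = a ^ t * (1 - γ ^ t) := by
      rw [hbγ, Real.mul_rpow ha0.le hγ0]; ring
    rcases le_or_gt γ (1/2) with hγh | hγh
    · -- small γ: use BconstNeg
      refine le_trans ?_ (le_max_right _ _)
      have h1γ : (0:ℝ) < 1 - γ := by linarith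
      have hd : (0:ℝ) < (1 - γ) ^ t := Real.rpow_pos_of_pos h1γ t
      have habt : (a - b) ^ t = a ^ t * (1 - γ) ^ t := by
        rw [heq2, Real.mul_rpow ha0.le h1γ.le]
      have hfac : a ^ t - b ^ t = ((1 - γ ^ t) / (1 - γ) ^ t) * ((a - b) ^ t) := by
        rw [heq1, habt]; field_simp
      rw [hfac]
      have hB : (1 - γ ^ t) / (1 - γ) ^ t ≤ Bconst s :=
        (aux_Bneg_ge s hs γ t ⟨hγ0, hγh⟩ ht).trans (le_max_left _ _)
      exact mul_le_mul_of_nonneg_right hB (Real.rpow_nonneg (by linarith) t)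
    · -- large γ: use Aconst
      rcases eq_or_lt_of_le hγ1 with hγe | hγlt
      · -- γ = 1 : b = a
        have hbe : b = a := (div_eq_one_iff_eq ha0.ne').mp hγe
        rw [hbe, sub_self, sub_self]
        exact le_trans (Real.rpow_nonneg (by norm_num) _) (le_max_left _ _)
      · refine le_trans ?_ (le_max_left _ _)
        have hγpos : (0:ℝ) < γ := by linarith
        have h1γ : (0:ℝ) < 1 - γ := by linarith
        have hA0 := aux_A_nonneg s hs
        have hA1 := aux_A_le_one s hs
        have hAt : Aconst s * t ≤ t := by nlinarith
        have h1 : a ^ t ≤ a ^ (Aconst s * t) :=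
          Real.rpow_le_rpow_of_exponent_ge ha0 ha1 hAt
        have h2 : 1 - γ ^ t ≤ (1 - γ) ^ (Aconst s * t) := by
          have hst : γ ^ s ≤ γ ^ t :=
            Real.rpow_le_rpow_of_exponent_ge hγpos hγ1 (le_trans ht.2 (le_refl s))
          have hb : 1 - γ ^ s ≤ (1 - γ) ^ (Aconst s * s) :=
            aux_A_key s hs γ ⟨hγh.le, hγlt⟩
          have hc : (1 - γ) ^ (Aconst s * s) ≤ (1 - γ) ^ (Aconst s * t) :=
            Real.rpow_le_rpow_of_exponent_ge h1γ (by linarith)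
              (mul_le_mul_of_nonneg_left ht.2 hA0)
          linarith
        rw [heq1, heq2, Real.mul_rpow ha0.le h1γ.le]
        have hγt1 : γ ^ t ≤ 1 := Real.rpow_le_one hγ0 hγ1 ht0.le
        exact mul_le_mul h1 h2 (by linarith) (Real.rpow_nonneg ha0.le _)

lemma opp_sign_lemma (s : ℝ) (hs : 1 ≤ s) (a b t : ℝ) (hb0 : 0 ≤ b) (hba : b ≤ a) (ha1 : a ≤ 1)
    (ht : t ∈ Set.Icc (1/s) s) :
    a ^ t + b ^ t ≤ Bconst s * (a + b) ^ t := by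
  have hs0 : (0:ℝ) < s := lt_of_lt_of_le one_pos hs
  have ht0 : (0:ℝ) < t := lt_of_lt_of_le (by positivity) ht.1
  rcases eq_or_lt_of_le (hb0.trans hba) with ha0 | ha0
  · have hb : b = 0 := le_antisymm (ha0 ▸ hba) hb0
    rw [← ha0, hb]
    simp [Real.zero_rpow ht0.ne']
  · set γ : ℝ := b / a with hγdef
    have hγ0 : 0 ≤ γ := div_nonneg hb0 ha0.le
    have hγ1 : γ ≤ 1 := (div_le_one ha0).mpr hba
    have hbγ : b = a * γ := by rw [hγdef, ← mul_div_assoc, mul_div_cancel_left₀ _ ha0.ne']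
    have h1γ : (0:ℝ) < 1 + γ := by linarith
    have hd : (0:ℝ) < (1 + γ) ^ t := Real.rpow_pos_of_pos h1γ t
    have habt : (a + b) ^ t = a ^ t * (1 + γ) ^ t := by
      rw [show a + b = a * (1 + γ) by rw [hbγ]; ring, Real.mul_rpow ha0.le h1γ.le]
    have hfac : a ^ t + b ^ t = ((1 + γ ^ t) / (1 + γ) ^ t) * ((a + b) ^ t) := by
      rw [habt, hbγ, Real.mul_rpow ha0.le hγ0]; field_simp
    rw [hfac]
    have hB : (1 + γ ^ t) / (1 + γ) ^ t ≤ Bconst s :=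
      (aux_Bpos_ge s hs γ t ⟨hγ0, hγ1⟩ ht).trans (le_max_right _ _)
    exact mul_le_mul_of_nonneg_right hB (Real.rpow_nonneg (by linarith) t)

lemma sign_mul_abs_rpow (x t : ℝ) (ht : t ≠ 0) (hx : 0 ≤ x) :
    Real.sign x * |x| ^ t = x ^ t := by
  rcases eq_or_lt_of_le hx with h | h
  · simp [← h, Real.zero_rpow ht]
  · rw [Real.sign_of_pos h, abs_of_pos h, one_mul]

lemma core2 (s : ℝ) (hs : 1 ≤ s) (t : ℝ) (ht : t ∈ Set.Icc (1/s) s) (α β : ℝ)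
    (hα1 : α ≤ 1) (hba : |β| ≤ α) :
    |Real.sign α * |α| ^ t - Real.sign β * |β| ^ t| ≤
      max (|α - β| ^ (Aconst s * t)) (Bconst s * |α - β| ^ t) := by
  have hs0 : (0:ℝ) < s := lt_of_lt_of_le one_pos hs
  have ht0 : (0:ℝ) < t := lt_of_lt_of_le (by positivity) ht.1
  have hα0 : 0 ≤ α := le_trans (abs_nonneg β) hba
  rcases le_or_gt 0 β with hβ0 | hβ0
  · -- same sign
    have hβa : β ≤ α := le_trans (le_abs_self β) hba
    rw [sign_mul_abs_rpow α t ht0.ne' hα0, sign_mul_abs_rpow β t ht0.ne' hβ0]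
    rw [abs_of_nonneg (by linarith : (0:ℝ) ≤ α - β),
      abs_of_nonneg (sub_nonneg.mpr (Real.rpow_le_rpow hβ0 hβa ht0.le))]
    exact same_sign_lemma s hs α β t hβ0 hβa hα1 ht
  · -- opposite signs
    have hb : |β| = -β := abs_of_neg hβ0
    rw [sign_mul_abs_rpow α t ht0.ne' hα0, Real.sign_of_neg hβ0, hb, neg_one_mul, sub_neg_eq_add]
    have hba' : -β ≤ α := hb ▸ hba
    rw [abs_of_nonneg (add_nonneg (Real.rpow_nonneg hα0 t) (Real.rpow_nonneg (by linarith) t))]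
    rw [abs_of_nonneg (by linarith : (0:ℝ) ≤ α - β)]
    refine le_trans ?_ (le_max_right _ _)
    have := opp_sign_lemma s hs α (-β) t (by linarith) hba' hα1 ht
    rw [show α + -β = α - β by ring] at this
    exact this

lemma core1 (s : ℝ) (hs : 1 ≤ s) (t : ℝ) (ht : t ∈ Set.Icc (1/s) s) (α β : ℝ)
    (hα : α ∈ Set.Icc (-1:ℝ) 1) (hba : |β| ≤ |α|) :
    |Real.sign α * |α| ^ t - Real.sign β * |β| ^ t| ≤
      max (|α - β| ^ (Aconst s * t)) (Bconst s * |α - β| ^ t) := by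
  rcases le_or_gt 0 α with hα0 | hα0
  · exact core2 s hs t ht α β hα.2 (hba.trans_eq (abs_of_nonneg hα0))
  · have h := core2 s hs t ht (-α) (-β) (by linarith [hα.1])
      (by rw [abs_neg]; exact hba.trans_eq (abs_of_neg hα0))
    rw [Real.sign_neg, Real.sign_neg, abs_neg, abs_neg] at h
    have e1 : -Real.sign α * |α| ^ t - -Real.sign β * |β| ^ t =
        -(Real.sign α * |α| ^ t - Real.sign β * |β| ^ t) := by ring
    have e2 : -α - -β = -(α - β) := by ring
    rw [e1, e2, abs_neg, abs_neg] at h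
    exact h

theorem stmt4 (s : ℝ) (hs : 1 ≤ s) (α β t : ℝ)
    (hα : α ∈ Set.Icc (-1:ℝ) 1) (hβ : β ∈ Set.Icc (-1:ℝ) 1) (ht : t ∈ Set.Icc (1/s) s) :
    |Real.sign α * |α| ^ t - Real.sign β * |β| ^ t| ≤
      max (|α - β| ^ (Aconst s * t)) (Bconst s * |α - β| ^ t) := by
  rcases le_total |β| |α| with hba | hba
  · exact core1 s hs t ht α β hα hba
  · have h := core1 s hs t ht β α hβ hba
    rw [abs_sub_comm β α, abs_sub_comm (Real.sign β * |β| ^ t)] at h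
    exact h
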